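/- In Region 2 (both wild and commercial bees present), the solution of the first-order conditions ∂q/∂x₁ / ∂q/∂x₂ = w₁/w₂ and q(x₁,x₂) = q̄ for q(x₁,x₂) = (κ - g·x₁ + x₂)^α · x₁^(1-α) is x̂₁ = Δ₁^α·q̄ and x̂₂ = Δ₁^α·(α·w₁ + w₂·g)/((1-α)·w₂)·q̄ - κ, where Δ₁ = ((1-α)/α)·w₂/(w₁ + w₂·g). -/

import Mathlib

/-- Region-2 interior solution satisfies the first-order condition
(marginal rate of technical substitution = price ratio) and the output constraint. -/
theorem region2_foc (κ g w₁ w₂ α q : ℝ) (hκ : 0 < κ) (hg : 0 < g)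
    (hw₁ : 0 < w₁) (hw₂ : 0 < w₂) (hα : 0 < α) (hα1 : α < 1) (hq : 0 < q) :
    let Δ₁ : ℝ := ((1 - α) / α) * w₂ / (w₁ + w₂ * g)
    let x₁ : ℝ := Δ₁ ^ α * q
    let x₂ : ℝ := Δ₁ ^ α * (α * w₁ + w₂ * g) / ((1 - α) * w₂) * q - κ
    let Q : ℝ → ℝ → ℝ := fun a b => (κ - g * a + b) ^ α * a ^ (1 - α)
    0 < x₂ → 0 < κ - g * x₁ →
      (deriv (fun a => Q a x₂) x₁) / (deriv (fun b => Q x₁ b) x₂) = w₁ / w₂ ∧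
      Q x₁ x₂ = q := by
  intro Δ₁ x₁ x₂ Q hx₂ hκx
  have hα' : (0:ℝ) < 1 - α := by linarith
  have hwg : 0 < w₁ + w₂ * g := by positivity
  have hΔpos : 0 < Δ₁ := by
    show (0:ℝ) < ((1 - α) / α) * w₂ / (w₁ + w₂ * g)
    positivity
  have hx₁pos : 0 < x₁ := by
    show (0:ℝ) < Δ₁ ^ α * q
    positivity
  set S : ℝ := κ - g * x₁ + x₂ with hSdef
  have hSpos : 0 < S := by simp only [hSdef]; linarith
  -- key closed forms
  have hx₁eq : x₁ = Δ₁ ^ α * q := rfl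
  have hSeq : S = Δ₁ ^ (α - 1) * q := by
    rw [Real.rpow_sub hΔpos, Real.rpow_one]
    show κ - g * (Δ₁ ^ α * q) +
        (Δ₁ ^ α * (α * w₁ + w₂ * g) / ((1 - α) * w₂) * q - κ) = Δ₁ ^ α / Δ₁ * q
    show κ - g * (Δ₁ ^ α * q) +
        (Δ₁ ^ α * (α * w₁ + w₂ * g) / ((1 - α) * w₂) * q - κ) =
        Δ₁ ^ α / (((1 - α) / α) * w₂ / (w₁ + w₂ * g)) * q
    field_simp
    ring
  -- key proportionality: (1-α) * w₂ * S = α * (w₁ + w₂*g) * x₁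
  have hkey : (1 - α) * w₂ * S = α * (w₁ + w₂ * g) * x₁ := by
    rw [hSeq, hx₁eq]
    have : Δ₁ ^ α = Δ₁ ^ (α - 1) * Δ₁ := by
      rw [← Real.rpow_add_one hΔpos.ne' (α - 1)]; ring_nf
    rw [this]
    have hΔ : Δ₁ = ((1 - α) / α) * w₂ / (w₁ + w₂ * g) := rfl
    rw [hΔ]
    field_simp
  -- derivatives
  have hlin1 : HasDerivAt (fun a : ℝ => κ - g * a + x₂) (-g) x₁ := by
    simpa using (((hasDerivAt_id x₁).const_mul g).const_sub κ).add_const x₂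
  have h2 : HasDerivAt (fun a : ℝ => (κ - g * a + x₂) ^ α)
      (-g * α * S ^ (α - 1)) x₁ :=
    hlin1.rpow_const (Or.inl hSpos.ne')
  have h3 : HasDerivAt (fun a : ℝ => a ^ (1 - α))
      ((1 - α) * x₁ ^ (1 - α - 1)) x₁ :=
    Real.hasDerivAt_rpow_const (Or.inl hx₁pos.ne')
  have hd1 : deriv (fun a => Q a x₂) x₁ =
      (-g * α * S ^ (α - 1)) * x₁ ^ (1 - α) + S ^ α * ((1 - α) * x₁ ^ (1 - α - 1)) := by
    exact (h2.mul h3).deriv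
  have hlin2 : HasDerivAt (fun b : ℝ => κ - g * x₁ + b) 1 x₂ := by
    simpa using (hasDerivAt_id x₂).const_add (κ - g * x₁)
  have hd2 : deriv (fun b => Q x₁ b) x₂ =
      (1 * α * S ^ (α - 1)) * x₁ ^ (1 - α) := by
    exact ((hlin2.rpow_const (Or.inl hSpos.ne')).mul_const (x₁ ^ (1 - α))).deriv
  constructor
  · rw [hd1, hd2]
    have hA : (0:ℝ) < S ^ (α - 1) := Real.rpow_pos_of_pos hSpos _
    have hB : (0:ℝ) < x₁ ^ (1 - α) := Real.rpow_pos_of_pos hx₁pos _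
    have hSα : S ^ α = S ^ (α - 1) * S := by
      rw [← Real.rpow_add_one hSpos.ne' (α - 1)]; ring_nf
    have hx₁α : x₁ ^ (1 - α - 1) = x₁ ^ (1 - α) / x₁ := by
      rw [← Real.rpow_sub_one hx₁pos.ne' (1 - α)]
    rw [hSα, hx₁α]
    have hnum : -g * α * S ^ (α - 1) * x₁ ^ (1 - α) +
        S ^ (α - 1) * S * ((1 - α) * (x₁ ^ (1 - α) / x₁)) =
        (w₁ / w₂) * (1 * α * S ^ (α - 1) * x₁ ^ (1 - α)) := by
      field_simp
      linear_combination hkey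
    rw [hnum, mul_div_assoc, div_self (by positivity), mul_one]
  · show S ^ α * x₁ ^ (1 - α) = q
    rw [hSeq, hx₁eq,
      Real.mul_rpow (by positivity) hq.le, Real.mul_rpow (by positivity) hq.le,
      ← Real.rpow_mul hΔpos.le, ← Real.rpow_mul hΔpos.le,
      mul_mul_mul_comm, ← Real.rpow_add hΔpos, ← Real.rpow_add hq,
      show (α - 1) * α + α * (1 - α) = 0 by ring,
      show α + (1 - α) = 1 by ring, Real.rpow_zero, Real.rpow_one, one_mul]
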